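/- Let (E,C) be an adaptable separated graph, K a field with involution, p ∈ I_free, and let m₁ = ∏_{j=1}^{k(p)} α(p,j)^{k_j}(α(p,j)^*)^{k_j} and m₂ = ∏_{j=1}^{k(p)} α(p,j)^{l_j}(α(p,j)^*)^{l_j} be idempotent monomials at p. Let m₁ ∨ m₂ := ∏_{j=1}^{k(p)} α(p,j)^{min(k_j,l_j)}(α(p,j)^*)^{min(k_j,l_j)} (the least upper bound of m₁ and m₂ in 𝓔). Then in S_K(E,C) one has ι(m₁ ∨ m₂) = ι(m₁) ∨ ι(m₂) = ι(m₁) + ι(m₂) − ι(m₁)ι(m₂). -/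

import Mathlib

/-! ## Adaptable separated graphs -/

/-- An **adaptable separated graph** `(E,C)`.  The data consists of a directed graph
(`V`, `E`, `src`, `rng`), a separation `C` assigning to each vertex a partition of the
(finite, nonempty) sets of edges it emits, together with the finite poset `I` of transitive
components (the antisymmetrization of the path-way preorder), a partition of `I` into free
and regular primes, and for each free prime `p` the distinguished vertex `fv p`, the loops
`α p i` (`i < k p`) and the connectors `β p i t` (`t < g p i`), subject to the axioms of
[Definition 1.4 of the paper]. -/
structure ASG where
  V : Type
  E : Type
  decV : DecidableEq V
  decE : DecidableEq E
  src : E → V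
  rng : E → V
  /-- the members of the partition at each vertex -/
  C : V → Set (Finset E)
  C_src : ∀ v : V, ∀ X ∈ C v, ∀ e ∈ X, src e = v
  C_nonempty : ∀ v : V, ∀ X ∈ C v, X.Nonempty
  C_cover : ∀ e : E, ∃ X ∈ C (src e), e ∈ X
  C_disj : ∀ v : V, ∀ X ∈ C v, ∀ Y ∈ C v, X ≠ Y → ∀ e ∈ X, e ∉ Y
  /-- the finite poset of transitive components -/
  I : Type
  Ifin : Finite I
  Iord : PartialOrder I
  /-- the component of a vertex -/
  π : V → I
  π_surj : Function.Surjective π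
  /-- `(I, ≤)` is the antisymmetrization of the path-way preorder:
  `π v ≤ π w` iff there is a directed path from `w` to `v`. -/
  π_spec : ∀ v w : V, Iord.le (π v) (π w) ↔
    Relation.ReflTransGen (fun a b => ∃ e : E, src e = a ∧ rng e = b) w v
  /-- the free primes; the regular primes are the complement -/
  free : I → Prop
  /-- the single vertex of each free component (junk value at regular primes) -/
  fv : I → V
  fv_spec : ∀ p : I, free p → ∀ v : V, π v = p ↔ v = fv p
  /-- the number of loops at each free prime (junk value at regular primes) -/
  k : I → ℕ
  /-- the loops at each free prime (junk value at regular primes) -/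
  α : ∀ p : I, Fin (k p) → E
  /-- the number of connectors attached to each loop -/
  g : ∀ p : I, Fin (k p) → ℕ
  /-- the connectors at each free prime -/
  β : ∀ (p : I) (i : Fin (k p)), Fin (g p i) → E
  gpos : ∀ p : I, free p → ∀ i, 1 ≤ g p i
  α_src : ∀ p : I, free p → ∀ i, src (α p i) = fv p
  α_rng : ∀ p : I, free p → ∀ i, rng (α p i) = fv p
  β_src : ∀ p : I, free p → ∀ i t, src (β p i t) = fv p
  β_down : ∀ p : I, free p → ∀ i t, Iord.lt (π (rng (β p i t))) p
  /-- description of the partition at a free vertex: the sets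
  `X_i = {α(p,i), β(p,i,1), …, β(p,i,g(p,i))}` -/
  X_def : ∀ p : I, free p → ∀ X : Finset E, X ∈ C (fv p) ↔
    ∃ i : Fin (k p), X = insert (α p i) (Finset.image (β p i) Finset.univ)
  α_inj : ∀ p : I, free p → Function.Injective (α p)
  β_inj : ∀ p : I, free p →
    Function.Injective (fun x : Σ i : Fin (k p), Fin (g p i) => β p x.1 x.2)
  α_ne_β : ∀ p : I, free p → ∀ i j t, α p i ≠ β p j t
  /-- a free vertex is a sink iff its prime is minimal -/
  free_min : ∀ p : I, free p →
    ((¬ ∃ e : E, src e = fv p) ↔ ∀ q : I, Iord.le q p → Iord.le p q)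
  /-- the edges of the subgraph `E_p`, `p` free, are exactly the loops -/
  free_edges : ∀ p : I, free p → ∀ e : E, src e = fv p → π (rng e) = p → ∃ i, e = α p i
  /-- at a regular vertex the partition is trivial: `|C_v| = 1` -/
  reg_C_unique : ∀ v : V, ¬ free (π v) → ∀ X ∈ C v, ∀ Y ∈ C v, X = Y
  /-- every vertex of a regular component emits at least two edges inside its component -/
  reg_two : ∀ v : V, ¬ free (π v) → ∃ e f : E, e ≠ f ∧ src e = v ∧ src f = v ∧
    π (rng e) = π v ∧ π (rng f) = π v
  /-- regular components are transitive -/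
  reg_trans : ∀ v w : V, ¬ free (π v) → π v = π w →
    Relation.ReflTransGen (fun a b => ∃ e : E, src e = a ∧ rng e = b ∧ π (rng e) = π v) v w

attribute [instance] ASG.decV ASG.decE ASG.Ifin ASG.Iord

/-! ## The inverse semigroup `S(E,C)` -/

/-- Generators of the `*`-semigroup `S(E,C)`: vertices, edges, formal adjoints of edges,
and the auxiliary variables `t_i^v` and their inverses. -/
inductive ASG.Gen (G : ASG) : Type
  | vert : G.V → ASG.Gen G
  | edge : G.E → ASG.Gen G
  | edgeS : G.E → ASG.Gen G
  | t : G.V → ℕ → ASG.Gen G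
  | tI : G.V → ℕ → ASG.Gen G

/-- The star operation on generators. -/
def ASG.Gen.star {G : ASG} : ASG.Gen G → ASG.Gen G
  | .vert v => .vert v
  | .edge e => .edgeS e
  | .edgeS e => .edge e
  | .t v i => .tI v i
  | .tI v i => .t v i

/-- The free `*`-semigroup with zero on the generators. -/
abbrev ASG.PreS (G : ASG) : Type := WithZero (FreeSemigroup (ASG.Gen G))

/-- A single generator, as an element of the free `*`-semigroup with zero. -/
def ASG.ofg {G : ASG} (g : ASG.Gen G) : ASG.PreS G :=
  ((FreeSemigroup.of g : FreeSemigroup (ASG.Gen G)) : ASG.PreS G)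

/-- The star operation on the free semigroup (reverse the word, star each letter). -/
def ASG.wstar {G : ASG} (x : FreeSemigroup (ASG.Gen G)) : FreeSemigroup (ASG.Gen G) :=
  (FreeSemigroup.lift (fun g => MulOpposite.op (FreeSemigroup.of (ASG.Gen.star g))) x).unop

/-- The star operation on the free `*`-semigroup with zero. -/
def ASG.sstar {G : ASG} : ASG.PreS G → ASG.PreS G :=
  Option.map ASG.wstar

/-- the value of `σ^p_j(i)` (0-indexed): the unique increasing bijection
`{0,…,k-1} ∖ {j} → {0,…,k-2}` -/
def ASG.sig (j i : ℕ) : ℕ := if i < j then i else i - 1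

open ASG in
/-- The defining relations of `S(E,C)` (all the purely multiplicative relations of
(2.1) in the paper, i.e. all relations except `(ii)(d)` and `(1)(ii)`). -/
inductive ASG.RB (G : ASG) : ASG.PreS G → ASG.PreS G → Prop
  | vv (v : G.V) : RB G (ofg (.vert v) * ofg (.vert v)) (ofg (.vert v))
  | vw (v w : G.V) (h : v ≠ w) : RB G (ofg (.vert v) * ofg (.vert w)) 0
  | se (e : G.E) : RB G (ofg (.vert (G.src e)) * ofg (.edge e)) (ofg (.edge e))
  | er (e : G.E) : RB G (ofg (.edge e) * ofg (.vert (G.rng e))) (ofg (.edge e))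
  | ee (e : G.E) : RB G (ofg (.edgeS e) * ofg (.edge e)) (ofg (.vert (G.rng e)))
  | ef (e f : G.E) (X : Finset G.E) (hX : X ∈ G.C (G.src e)) (he : e ∈ X) (hf : f ∈ X)
      (hef : e ≠ f) : RB G (ofg (.edgeS e) * ofg (.edge f)) 0
  | acomm (p : G.I) (hp : G.free p) (i j : Fin (G.k p)) (hij : i ≠ j) :
      RB G (ofg (.edge (G.α p i)) * ofg (.edge (G.α p j)))
           (ofg (.edge (G.α p j)) * ofg (.edge (G.α p i)))
  | acommS (p : G.I) (hp : G.free p) (i j : Fin (G.k p)) (hij : i ≠ j) :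
      RB G (ofg (.edge (G.α p i)) * ofg (.edgeS (G.α p j)))
           (ofg (.edgeS (G.α p j)) * ofg (.edge (G.α p i)))
  | bb (p : G.I) (hp : G.free p) (i j : Fin (G.k p)) (hij : i ≠ j)
      (s : Fin (G.g p i)) (t : Fin (G.g p j)) :
      RB G (ofg (.edgeS (G.β p i s)) * ofg (.edge (G.β p j t))) 0
  | tcomm (v : G.V) (i j : ℕ) :
      RB G (ofg (.t v i) * ofg (.t v j)) (ofg (.t v j) * ofg (.t v i))
  | ttIcomm (v : G.V) (i j : ℕ) :
      RB G (ofg (.t v i) * ofg (.tI v j)) (ofg (.tI v j) * ofg (.t v i))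
  | vt (v : G.V) (i : ℕ) : RB G (ofg (.vert v) * ofg (.t v i)) (ofg (.t v i))
  | tv (v : G.V) (i : ℕ) : RB G (ofg (.t v i) * ofg (.vert v)) (ofg (.t v i))
  | ttI (v : G.V) (i : ℕ) : RB G (ofg (.t v i) * ofg (.tI v i)) (ofg (.vert v))
  | tIt (v : G.V) (i : ℕ) : RB G (ofg (.tI v i) * ofg (.t v i)) (ofg (.vert v))
  | treg (e : G.E) (h : ¬ G.free (G.π (G.src e))) (i : ℕ) :
      RB G (ofg (.t (G.src e) i) * ofg (.edge e)) (ofg (.edge e) * ofg (.t (G.rng e) i))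
  | tIreg (e : G.E) (h : ¬ G.free (G.π (G.src e))) (i : ℕ) :
      RB G (ofg (.tI (G.src e) i) * ofg (.edge e)) (ofg (.edge e) * ofg (.tI (G.rng e) i))
  | tb (p : G.I) (hp : G.free p) (i : ℕ) (j : Fin (G.k p)) (s : Fin (G.g p j)) :
      RB G (ofg (.t (G.fv p) i) * ofg (.edge (G.β p j s)))
           (ofg (.edge (G.β p j s)) * ofg (.t (G.rng (G.β p j s)) (i + G.k p - 1)))
  | tIb (p : G.I) (hp : G.free p) (i : ℕ) (j : Fin (G.k p)) (s : Fin (G.g p j)) :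
      RB G (ofg (.tI (G.fv p) i) * ofg (.edge (G.β p j s)))
           (ofg (.edge (G.β p j s)) * ofg (.tI (G.rng (G.β p j s)) (i + G.k p - 1)))
  | ab (p : G.I) (hp : G.free p) (i j : Fin (G.k p)) (hij : i ≠ j) (s : Fin (G.g p j)) :
      RB G (ofg (.edge (G.α p i)) * ofg (.edge (G.β p j s)))
           (ofg (.edge (G.β p j s)) * ofg (.t (G.rng (G.β p j s)) (sig (j : ℕ) (i : ℕ))))
  | aSb (p : G.I) (hp : G.free p) (i j : Fin (G.k p)) (hij : i ≠ j) (s : Fin (G.g p j)) :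
      RB G (ofg (.edgeS (G.α p i)) * ofg (.edge (G.β p j s)))
           (ofg (.edge (G.β p j s)) * ofg (.tI (G.rng (G.β p j s)) (sig (j : ℕ) (i : ℕ))))
  | ta (p : G.I) (hp : G.free p) (i : ℕ) (j : Fin (G.k p)) :
      RB G (ofg (.t (G.fv p) i) * ofg (.edge (G.α p j)))
           (ofg (.edge (G.α p j)) * ofg (.t (G.fv p) i))
  | taS (p : G.I) (hp : G.free p) (i : ℕ) (j : Fin (G.k p)) :
      RB G (ofg (.t (G.fv p) i) * ofg (.edgeS (G.α p j)))
           (ofg (.edgeS (G.α p j)) * ofg (.t (G.fv p) i))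

/-- The `*`-semigroup congruence generated by the defining relations. -/
inductive ASG.SR (G : ASG) : ASG.PreS G → ASG.PreS G → Prop
  | of {x y : ASG.PreS G} : ASG.RB G x y → ASG.SR G x y
  | refl (x : ASG.PreS G) : ASG.SR G x x
  | symm {x y : ASG.PreS G} : ASG.SR G x y → ASG.SR G y x
  | trans {x y z : ASG.PreS G} : ASG.SR G x y → ASG.SR G y z → ASG.SR G x z
  | mul_left {x y : ASG.PreS G} (a : ASG.PreS G) : ASG.SR G x y → ASG.SR G (a * x) (a * y)
  | mul_right {x y : ASG.PreS G} (a : ASG.PreS G) : ASG.SR G x y → ASG.SR G (x * a) (y * a)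
  | star {x y : ASG.PreS G} : ASG.SR G x y → ASG.SR G (ASG.sstar x) (ASG.sstar y)

/-- The setoid on the free `*`-semigroup with zero given by the congruence. -/
def ASG.secSetoid (G : ASG) : Setoid (ASG.PreS G) :=
  ⟨ASG.SR G, ⟨ASG.SR.refl, ASG.SR.symm, ASG.SR.trans⟩⟩

/-- The inverse semigroup `S(E,C)` associated to an adaptable separated graph, defined by
the generators and the relations of (2.1) in the paper (excluding `(ii)(d)` and `(1)(ii)`). -/
def ASG.SEC (G : ASG) : Type := Quotient (ASG.secSetoid G)

instance (G : ASG) : Mul (ASG.SEC G) :=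
  ⟨Quotient.map₂ (· * ·) (fun _ b hab c _ hcd =>
    ASG.SR.trans (ASG.SR.mul_right c hab) (ASG.SR.mul_left b hcd))⟩

instance (G : ASG) : Zero (ASG.SEC G) := ⟨Quotient.mk (ASG.secSetoid G) 0⟩

instance (G : ASG) : Star (ASG.SEC G) :=
  ⟨Quotient.map ASG.sstar (fun _ _ h => ASG.SR.star h)⟩

instance (G : ASG) : Semigroup (ASG.SEC G) where
  mul_assoc a b c := by
    induction a using Quotient.ind
    induction b using Quotient.ind
    induction c using Quotient.ind
    exact congrArg (Quotient.mk _) (mul_assoc _ _ _)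

/-- The class of a word of generators in `S(E,C)`; the empty word is sent to `0`
(it never occurs for the words we use). -/
def ASG.mkS (G : ASG) : List (ASG.Gen G) → ASG.SEC G
  | [] => 0
  | (g :: rest) => Quotient.mk (ASG.secSetoid G)
      (rest.foldl (fun acc h => acc * ASG.ofg h) (ASG.ofg g))

/-- idempotents of `S(E,C)` -/
def ASG.IsIdem {G : ASG} (x : ASG.SEC G) : Prop := x * x = x

/-! ## The `*`-algebra `S_K(E,C)` -/

/-- The extra algebra relations: the class of the zero of the semigroup is zero, and the
separated-graph relations `v = Σ_{e ∈ X} e e^*` for `v ∈ E^0`, `X ∈ C_v` (relations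
(2.1)(ii)(d) and (1)(ii) of the paper).  The generating family is closed under scalars. -/
inductive ASG.ARel (K : Type) [Field K] (G : ASG) :
    MonoidAlgebra K (ASG.SEC G) → MonoidAlgebra K (ASG.SEC G) → Prop
  | zero (c : K) : ASG.ARel K G (MonoidAlgebra.single (0 : ASG.SEC G) c) 0
  | sums (c : K) (v : G.V) (X : Finset G.E) (hX : X ∈ G.C v) :
      ASG.ARel K G (MonoidAlgebra.single (ASG.mkS G [.vert v]) c)
        (X.sum fun e => MonoidAlgebra.single
          (ASG.mkS G [.edge e] * star (ASG.mkS G [.edge e])) c)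

/-- The `*`-algebra `S_K(E,C)`: the quotient of the semigroup algebra of `S(E,C)` over `K`
by the two-sided congruence generated by the relations above; equivalently, the `K`-algebra
presented by the generators `E⁰ ∪ E¹ ∪ {(tᵥⁱ)^{±1}}` and all the relations (2.1). -/
def ASG.SK (K : Type) [Field K] (G : ASG) : Type :=
  (ringConGen (ASG.ARel K G)).Quotient

noncomputable instance (K : Type) [Field K] (G : ASG) :
    NonUnitalNonAssocRing (ASG.SK K G) := by
  unfold ASG.SK; infer_instance

/-- The natural representation `ι : S(E,C) → S_K(E,C)`. -/
noncomputable def ASG.iota (K : Type) [Field K] (G : ASG) (s : ASG.SEC G) : ASG.SK K G :=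
  ((MonoidAlgebra.single s (1 : K) : MonoidAlgebra K (ASG.SEC G)) :
    (ringConGen (ASG.ARel K G)).Quotient)

/-- The join `⋁` of a (finite) list of pairwise commuting idempotents in a ring,
defined by iterating `x ∨ y := x + y - x y` (with `⋁ ∅ = 0`). -/
def joinList {A : Type} [NonUnitalNonAssocRing A] (l : List A) : A :=
  l.foldr (fun x y => x + y - x * y) 0

/-- `l` is a finite cover of `F_e = {f ∈ 𝓔 : f ≤ e}`: it consists of idempotents `≤ e`,
and every nonzero idempotent `f ≤ e` satisfies `f z ≠ 0` for some `z ∈ l`. -/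
def ASG.IsCoverList {G : ASG} (e : ASG.SEC G) (l : List (ASG.SEC G)) : Prop :=
  (∀ x ∈ l, ASG.IsIdem x ∧ x * e = x) ∧
  (∀ f : ASG.SEC G, ASG.IsIdem f → f ≠ 0 → f * e = f → ∃ z ∈ l, f * z ≠ 0)

/-- a list of pairwise orthogonal elements -/
def ASG.IsOrthList {G : ASG} (l : List (ASG.SEC G)) : Prop :=
  ∀ x ∈ l, ∀ y ∈ l, x ≠ y → x * y = 0

/-- The word of the idempotent monomial `∏_{j} α(p,j)^{k_j} (α(p,j)^*)^{k_j}` at a free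
prime `p`. -/
def ASG.idemMonWord (G : ASG) (p : G.I) (kk : Fin (G.k p) → ℕ) : List (ASG.Gen G) :=
  ASG.Gen.vert (G.fv p) ::
    (List.ofFn fun j => List.replicate (kk j) (ASG.Gen.edge (G.α p j)) ++
      List.replicate (kk j) (ASG.Gen.edgeS (G.α p j))).flatten

namespace SJ

variable {G : ASG}

def q (G : ASG) : ASG.PreS G → ASG.SEC G := Quotient.mk (ASG.secSetoid G)

lemma q_mul (x y : ASG.PreS G) : q G x * q G y = q G (x * y) := rfl

lemma rel {x y : ASG.PreS G} (h : ASG.RB G x y) : q G x = q G y :=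
  Quotient.sound (ASG.SR.of h)

lemma relstar {x y : ASG.PreS G} (h : ASG.RB G x y) : q G (ASG.sstar x) = q G (ASG.sstar y) :=
  Quotient.sound (ASG.SR.star (ASG.SR.of h))

lemma zero_def : (0 : ASG.SEC G) = q G 0 := rfl

lemma zmul (x : ASG.SEC G) : 0 * x = 0 := by
  induction x using Quotient.ind with
  | _ w => exact congrArg (Quotient.mk _) (zero_mul w)

lemma mulz (x : ASG.SEC G) : x * 0 = 0 := by
  induction x using Quotient.ind with
  | _ w => exact congrArg (Quotient.mk _) (mul_zero w)

lemma wstar_mul (x y : FreeSemigroup (ASG.Gen G)) :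
    ASG.wstar (x * y) = ASG.wstar y * ASG.wstar x := by
  simp [ASG.wstar, map_mul]

lemma sstar_coe (w : FreeSemigroup (ASG.Gen G)) :
    ASG.sstar (w : ASG.PreS G) = (ASG.wstar w : ASG.PreS G) := rfl

lemma sstar_ofg (g : ASG.Gen G) : ASG.sstar (ASG.ofg g) = ASG.ofg g.star := by
  simp [ASG.ofg, sstar_coe, ASG.wstar]

lemma sstar_mul2 (g h : ASG.Gen G) :
    ASG.sstar (ASG.ofg g * ASG.ofg h) = ASG.ofg h.star * ASG.ofg g.star := by
  have : (ASG.ofg g * ASG.ofg h : ASG.PreS G) =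
      ((FreeSemigroup.of g * FreeSemigroup.of h : FreeSemigroup (ASG.Gen G)) : ASG.PreS G) := by
    simp [ASG.ofg]
  rw [this, sstar_coe, wstar_mul]
  simp [ASG.wstar, ASG.ofg]

end SJ

namespace SJ

@[simp] lemma star_vert {G : ASG} (v : G.V) : (ASG.Gen.vert v : ASG.Gen G).star = .vert v := rfl
@[simp] lemma star_edge {G : ASG} (e : G.E) : (ASG.Gen.edge e : ASG.Gen G).star = .edgeS e := rfl
@[simp] lemma star_edgeS {G : ASG} (e : G.E) : (ASG.Gen.edgeS e : ASG.Gen G).star = .edge e := rfl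
@[simp] lemma star_t {G : ASG} (v : G.V) (n : ℕ) : (ASG.Gen.t v n : ASG.Gen G).star = .tI v n := rfl
@[simp] lemma star_tI {G : ASG} (v : G.V) (n : ℕ) : (ASG.Gen.tI v n : ASG.Gen G).star = .t v n := rfl

section Prime

variable (G : ASG) (p : G.I)

def vE : ASG.SEC G := q G (ASG.ofg (.vert (G.fv p)))
def aE (i : Fin (G.k p)) : ASG.SEC G := q G (ASG.ofg (.edge (G.α p i)))
def asE (i : Fin (G.k p)) : ASG.SEC G := q G (ASG.ofg (.edgeS (G.α p i)))
def btE (i : Fin (G.k p)) (t : Fin (G.g p i)) : ASG.SEC G := q G (ASG.ofg (.edge (G.β p i t)))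
def bsE (i : Fin (G.k p)) (t : Fin (G.g p i)) : ASG.SEC G := q G (ASG.ofg (.edgeS (G.β p i t)))

variable {G p}
variable (hp : G.free p)
include hp

omit hp in
lemma r_vv : vE G p * vE G p = vE G p := rel (ASG.RB.vv _)

lemma r_va (i : Fin (G.k p)) : vE G p * aE G p i = aE G p i := by
  have h := rel (G := G) (ASG.RB.se (G.α p i))
  rwa [G.α_src p hp i] at h

lemma r_av (i : Fin (G.k p)) : aE G p i * vE G p = aE G p i := by
  have h := rel (G := G) (ASG.RB.er (G.α p i))
  rwa [G.α_rng p hp i] at h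

lemma r_asv (i : Fin (G.k p)) : asE G p i * vE G p = asE G p i := by
  have h := relstar (G := G) (ASG.RB.se (G.α p i))
  rw [sstar_mul2, sstar_ofg] at h
  simp only [star_vert, star_edge] at h
  rwa [G.α_src p hp i] at h

lemma r_vas (i : Fin (G.k p)) : vE G p * asE G p i = asE G p i := by
  have h := relstar (G := G) (ASG.RB.er (G.α p i))
  rw [sstar_mul2, sstar_ofg] at h
  simp only [star_vert, star_edge] at h
  rwa [G.α_rng p hp i] at h

lemma r_asa (i : Fin (G.k p)) : asE G p i * aE G p i = vE G p := by
  have h := rel (G := G) (ASG.RB.ee (G.α p i))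
  rwa [G.α_rng p hp i] at h

lemma r_aa {i j : Fin (G.k p)} (hij : i ≠ j) :
    aE G p i * aE G p j = aE G p j * aE G p i :=
  rel (ASG.RB.acomm p hp i j hij)

lemma r_aas {i j : Fin (G.k p)} (hij : i ≠ j) :
    aE G p i * asE G p j = asE G p j * aE G p i :=
  rel (ASG.RB.acommS p hp i j hij)

lemma r_asas {i j : Fin (G.k p)} (hij : i ≠ j) :
    asE G p j * asE G p i = asE G p i * asE G p j := by
  have h := relstar (G := G) (ASG.RB.acomm p hp i j hij)
  rw [sstar_mul2, sstar_mul2] at h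
  exact h

lemma r_vbt (i : Fin (G.k p)) (t : Fin (G.g p i)) : vE G p * btE G p i t = btE G p i t := by
  have h := rel (G := G) (ASG.RB.se (G.β p i t))
  rwa [G.β_src p hp i t] at h

lemma r_bsv (i : Fin (G.k p)) (t : Fin (G.g p i)) : bsE G p i t * vE G p = bsE G p i t := by
  have h := relstar (G := G) (ASG.RB.se (G.β p i t))
  rw [sstar_mul2, sstar_ofg] at h
  simp only [star_vert, star_edge] at h
  rwa [G.β_src p hp i t] at h

lemma r_bsbt {i j : Fin (G.k p)} (hij : i ≠ j) (s : Fin (G.g p i)) (t : Fin (G.g p j)) :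
    bsE G p i s * btE G p j t = 0 :=
  rel (ASG.RB.bb p hp i j hij s t)

lemma r_asbt {i j : Fin (G.k p)} (hij : i ≠ j) (t : Fin (G.g p j)) :
    asE G p i * btE G p j t =
      btE G p j t * q G (ASG.ofg (.tI (G.rng (G.β p j t)) (ASG.sig (j : ℕ) (i : ℕ)))) :=
  rel (ASG.RB.aSb p hp i j hij t)

lemma r_bsa {i j : Fin (G.k p)} (hij : i ≠ j) (t : Fin (G.g p j)) :
    bsE G p j t * aE G p i =
      q G (ASG.ofg (.t (G.rng (G.β p j t)) (ASG.sig (j : ℕ) (i : ℕ)))) * bsE G p j t := by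
  have h := relstar (G := G) (ASG.RB.aSb p hp i j hij t)
  rw [sstar_mul2, sstar_mul2] at h
  exact h

end Prime

section Prime2

variable {G : ASG} {p : G.I}

def Lp (G : ASG) (p : G.I) (j : Fin (G.k p)) : ℕ → ASG.SEC G
  | 0 => vE G p
  | n+1 => Lp G p j n * aE G p j

def Rp (G : ASG) (p : G.I) (j : Fin (G.k p)) : ℕ → ASG.SEC G
  | 0 => vE G p
  | n+1 => asE G p j * Rp G p j n

def Fp (G : ASG) (p : G.I) (j : Fin (G.k p)) (n : ℕ) : ASG.SEC G :=
  Lp G p j n * Rp G p j n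

variable (hp : G.free p)
include hp

lemma Lv (j : Fin (G.k p)) (n : ℕ) : Lp G p j n * vE G p = Lp G p j n := by
  induction n with
  | zero => exact r_vv
  | succ n ih => rw [Lp, mul_assoc, r_av hp]

lemma vL (j : Fin (G.k p)) (n : ℕ) : vE G p * Lp G p j n = Lp G p j n := by
  induction n with
  | zero => exact r_vv
  | succ n ih => rw [Lp, ← mul_assoc, ih]

lemma Rv (j : Fin (G.k p)) (n : ℕ) : Rp G p j n * vE G p = Rp G p j n := by
  induction n with
  | zero => exact r_vv
  | succ n ih => rw [Rp, mul_assoc, ih]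

lemma vR (j : Fin (G.k p)) (n : ℕ) : vE G p * Rp G p j n = Rp G p j n := by
  induction n with
  | zero => exact r_vv
  | succ n ih => rw [Rp, ← mul_assoc, r_vas hp]

lemma Lp_succ' (j : Fin (G.k p)) (n : ℕ) : Lp G p j (n+1) = aE G p j * Lp G p j n := by
  induction n with
  | zero => show Lp G p j 0 * aE G p j = _; rw [show Lp G p j 0 = vE G p from rfl,
      r_va hp, r_av hp]
  | succ n ih =>
    show Lp G p j (n+1) * aE G p j = _
    conv_lhs => rw [ih]
    rw [mul_assoc]
    exact rfl

lemma Rp_succ' (j : Fin (G.k p)) (n : ℕ) : Rp G p j (n+1) = Rp G p j n * asE G p j := by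
  induction n with
  | zero => show asE G p j * Rp G p j 0 = _; rw [show Rp G p j 0 = vE G p from rfl,
      r_asv hp, r_vas hp]
  | succ n ih =>
    show asE G p j * Rp G p j (n+1) = _
    conv_lhs => rw [ih]
    rw [← mul_assoc]
    exact rfl

lemma LL (j : Fin (G.k p)) (m n : ℕ) : Lp G p j m * Lp G p j n = Lp G p j (m+n) := by
  induction n with
  | zero => exact Lv hp j m
  | succ n ih => rw [Lp, ← mul_assoc, ih]; rfl

lemma RR (j : Fin (G.k p)) (m n : ℕ) : Rp G p j m * Rp G p j n = Rp G p j (m+n) := by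
  induction m with
  | zero => rw [Nat.zero_add]; exact vR hp j n
  | succ m ih => rw [Rp, mul_assoc, ih, Nat.succ_add]; rfl

lemma asL (j : Fin (G.k p)) (n : ℕ) : asE G p j * Lp G p j (n+1) = Lp G p j n := by
  rw [Lp_succ' hp, ← mul_assoc, r_asa hp, vL hp]

lemma RL_le (j : Fin (G.k p)) {m n : ℕ} (h : m ≤ n) :
    Rp G p j m * Lp G p j n = Lp G p j (n - m) := by
  induction m generalizing n with
  | zero => rw [Nat.sub_zero]; exact vL hp j n
  | succ m ih =>
    obtain ⟨n', rfl⟩ : ∃ n', n = n' + 1 := ⟨n - 1, by omega⟩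
    have h' : m ≤ n' := by omega
    rw [Rp, mul_assoc, ih (by omega : m ≤ n'+1),
      show n' + 1 - m = (n' - m) + 1 from by omega, asL hp, Nat.succ_sub_succ]

lemma RL_ge (j : Fin (G.k p)) {m n : ℕ} (h : n ≤ m) :
    Rp G p j m * Lp G p j n = Rp G p j (m - n) := by
  induction n generalizing m with
  | zero => rw [Nat.sub_zero]; exact Rv hp j m
  | succ n ih =>
    obtain ⟨m', rfl⟩ : ∃ m', m = m' + 1 := ⟨m - 1, by omega⟩
    have h' : n ≤ m' := by omega
    have hRa : Rp G p j (m' + 1) * aE G p j = Rp G p j m' := by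
      rw [Rp_succ' hp, mul_assoc, r_asa hp, Rv hp]
    rw [Lp_succ' hp, ← mul_assoc, hRa, ih h', Nat.succ_sub_succ]

lemma Fmax (j : Fin (G.k p)) (m n : ℕ) :
    Fp G p j m * Fp G p j n = Fp G p j (max m n) := by
  rcases le_total m n with h | h
  · rw [Fp, Fp, mul_assoc, ← mul_assoc (Rp G p j m), RL_le hp j h, ← mul_assoc,
      LL hp, Nat.add_sub_cancel' h, max_eq_right h]; rfl
  · rw [Fp, Fp, mul_assoc, ← mul_assoc (Rp G p j m), RL_ge hp j h, ← mul_assoc,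
      mul_assoc (Lp G p j m), RR hp, Nat.sub_add_cancel h, max_eq_left h]; rfl

variable {i j : Fin (G.k p)}

lemma aL (hij : i ≠ j) (m : ℕ) : aE G p j * Lp G p i m = Lp G p i m * aE G p j := by
  induction m with
  | zero => show aE G p j * vE G p = vE G p * aE G p j; rw [r_av hp, r_va hp]
  | succ m ih => rw [Lp, ← mul_assoc, ih, mul_assoc, r_aa hp (Ne.symm hij), ← mul_assoc]

lemma asL' (hij : i ≠ j) (m : ℕ) : asE G p j * Lp G p i m = Lp G p i m * asE G p j := by
  induction m with
  | zero => show asE G p j * vE G p = vE G p * asE G p j; rw [r_asv hp, r_vas hp]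
  | succ m ih => rw [Lp, ← mul_assoc, ih, mul_assoc, ← r_aas hp hij, ← mul_assoc]

lemma aR (hij : i ≠ j) (m : ℕ) : aE G p j * Rp G p i m = Rp G p i m * aE G p j := by
  induction m with
  | zero => show aE G p j * vE G p = vE G p * aE G p j; rw [r_av hp, r_va hp]
  | succ m ih => rw [Rp, ← mul_assoc, r_aas hp (Ne.symm hij), mul_assoc, ih, ← mul_assoc]

lemma asR (hij : i ≠ j) (m : ℕ) : asE G p j * Rp G p i m = Rp G p i m * asE G p j := by
  induction m with
  | zero => show asE G p j * vE G p = vE G p * asE G p j; rw [r_asv hp, r_vas hp]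
  | succ m ih => rw [Rp, ← mul_assoc, r_asas hp hij, mul_assoc, ih, ← mul_assoc]

lemma vF (j : Fin (G.k p)) (m : ℕ) : vE G p * Fp G p j m = Fp G p j m := by
  rw [Fp, ← mul_assoc, vL hp]

lemma Fv (j : Fin (G.k p)) (m : ℕ) : Fp G p j m * vE G p = Fp G p j m := by
  rw [Fp, mul_assoc, Rv hp]

lemma aF (hij : i ≠ j) (m : ℕ) : aE G p j * Fp G p i m = Fp G p i m * aE G p j := by
  rw [Fp, ← mul_assoc, aL hp hij, mul_assoc, aR hp hij, ← mul_assoc]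

lemma asF (hij : i ≠ j) (m : ℕ) : asE G p j * Fp G p i m = Fp G p i m * asE G p j := by
  rw [Fp, ← mul_assoc, asL' hp hij, mul_assoc, asR hp hij, ← mul_assoc]

lemma LF (hij : i ≠ j) (n m : ℕ) :
    Lp G p j n * Fp G p i m = Fp G p i m * Lp G p j n := by
  induction n with
  | zero => show vE G p * _ = _ * vE G p; rw [vF hp, Fv hp]
  | succ n ih => rw [Lp, mul_assoc, aF hp hij, ← mul_assoc, ih, mul_assoc]

lemma RF (hij : i ≠ j) (n m : ℕ) :
    Rp G p j n * Fp G p i m = Fp G p i m * Rp G p j n := by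
  induction n with
  | zero => show vE G p * _ = _ * vE G p; rw [vF hp, Fv hp]
  | succ n ih => rw [Rp, mul_assoc, ih, ← mul_assoc, asF hp hij, mul_assoc]

lemma Fcomm (i j : Fin (G.k p)) (m n : ℕ) :
    Fp G p i m * Fp G p j n = Fp G p j n * Fp G p i m := by
  rcases eq_or_ne i j with rfl | hij
  · rw [Fmax hp, Fmax hp, max_comm]
  · conv_lhs => rw [show Fp G p j n = Lp G p j n * Rp G p j n from rfl]
    rw [← mul_assoc, ← LF hp hij, mul_assoc, ← RF hp hij, ← mul_assoc]
    exact rfl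

lemma RLcomm (hij : i ≠ j) (s s' : ℕ) :
    Rp G p i s * Lp G p j s' = Lp G p j s' * Rp G p i s := by
  induction s with
  | zero => show vE G p * _ = _ * vE G p; rw [vL hp, Lv hp]
  | succ s ih => rw [Rp, mul_assoc, ih, ← mul_assoc, asL' hp (Ne.symm hij), mul_assoc]

end Prime2

section Zero

variable {G : ASG} {p : G.I}

def Gm (G : ASG) (p : G.I) (j : Fin (G.k p)) (s : ℕ) (t : Fin (G.g p j)) : ASG.SEC G :=
  Lp G p j s * (btE G p j t * (bsE G p j t * Rp G p j s))

variable (hp : G.free p) {i j : Fin (G.k p)}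
include hp

lemma Zmain (hij : i ≠ j) (t : Fin (G.g p i)) (s' : ℕ) (Y : ASG.SEC G)
    (hY : bsE G p i t * Y = 0) : bsE G p i t * (Lp G p j s' * Y) = 0 := by
  induction s' with
  | zero =>
    show bsE G p i t * (vE G p * Y) = 0
    rw [← mul_assoc, r_bsv hp, hY]
  | succ s' ih =>
    rw [Lp_succ' hp, mul_assoc, ← mul_assoc, r_bsa hp (Ne.symm hij) t, mul_assoc, ih, mulz]

lemma Z2 (hij : i ≠ j) (t' : Fin (G.g p j)) (s : ℕ) :
    Rp G p i s * btE G p j t' = btE G p j t' ∨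
      ∃ z, Rp G p i s * btE G p j t' = btE G p j t' * z := by
  induction s with
  | zero => exact Or.inl (r_vbt hp j t')
  | succ s ih =>
    have hstep : Rp G p i (s+1) * btE G p j t' =
        asE G p i * (Rp G p i s * btE G p j t') := mul_assoc _ _ _
    rcases ih with h | ⟨z, h⟩
    · exact Or.inr ⟨_, by rw [hstep, h, r_asbt hp hij t']⟩
    · exact Or.inr ⟨_, by rw [hstep, h, ← mul_assoc, r_asbt hp hij t', mul_assoc]⟩

lemma Zrest (hij : i ≠ j) (t : Fin (G.g p i)) (t' : Fin (G.g p j)) (s : ℕ)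
    (REST : ASG.SEC G) :
    bsE G p i t * (Rp G p i s * (btE G p j t' * REST)) = 0 := by
  rw [← mul_assoc (Rp G p i s)]
  rcases Z2 hp hij t' s with h | ⟨z, h⟩
  · rw [h, ← mul_assoc, r_bsbt hp hij t t', zmul]
  · rw [h, mul_assoc, ← mul_assoc, r_bsbt hp hij t t', zmul]

lemma Gortho (hij : i ≠ j) (s s' : ℕ) (t : Fin (G.g p i)) (t' : Fin (G.g p j)) :
    Gm G p i s t * Gm G p j s' t' = 0 := by
  show Lp G p i s * (btE G p i t * (bsE G p i t * Rp G p i s)) *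
    (Lp G p j s' * (btE G p j t' * (bsE G p j t' * Rp G p j s'))) = 0
  simp only [mul_assoc]
  rw [← mul_assoc (Rp G p i s) (Lp G p j s'), RLcomm hp hij, mul_assoc,
    Zmain hp hij t s' _ (Zrest hp hij t t' s _), mulz, mulz]

end Zero

section Words

variable {G : ASG}

def wprod (G : ASG) (x : ASG.SEC G) (w : List (ASG.Gen G)) : ASG.SEC G :=
  w.foldl (fun acc h => acc * q G (ASG.ofg h)) x

lemma q_foldl (w : List (ASG.Gen G)) (x : ASG.PreS G) :
    q G (w.foldl (fun acc h => acc * ASG.ofg h) x) = wprod G (q G x) w := by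
  induction w generalizing x with
  | nil => rfl
  | cons g w ih =>
    show q G (w.foldl _ (x * ASG.ofg g)) = wprod G _ w
    exact ih _

lemma mkS_cons (g : ASG.Gen G) (w : List (ASG.Gen G)) :
    ASG.mkS G (g :: w) = wprod G (q G (ASG.ofg g)) w := q_foldl w _

lemma wprod_append (x : ASG.SEC G) (w₁ w₂ : List (ASG.Gen G)) :
    wprod G x (w₁ ++ w₂) = wprod G (wprod G x w₁) w₂ :=
  List.foldl_append

variable {p : G.I} (hp : G.free p)
include hp

lemma wprod_repA (j : Fin (G.k p)) (m : ℕ) (x : ASG.SEC G) (hx : x * vE G p = x) :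
    wprod G x (List.replicate m (.edge (G.α p j))) = x * Lp G p j m := by
  induction m generalizing x with
  | zero => exact (hx).symm
  | succ m ih =>
    rw [List.replicate_succ]
    show wprod G (x * aE G p j) _ = _
    rw [ih _ (by rw [mul_assoc, r_av hp]), Lp_succ' hp, ← mul_assoc]

lemma wprod_repAS (j : Fin (G.k p)) (m : ℕ) (x : ASG.SEC G) (hx : x * vE G p = x) :
    wprod G x (List.replicate m (.edgeS (G.α p j))) = x * Rp G p j m := by
  induction m generalizing x with
  | zero => exact (hx).symm
  | succ m ih =>
    rw [List.replicate_succ]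
    show wprod G (x * asE G p j) _ = _
    rw [ih _ (by rw [mul_assoc, r_asv hp]), mul_assoc]
    exact rfl

def blockword (G : ASG) (p : G.I) (u : Fin (G.k p) → ℕ) (j : Fin (G.k p)) :
    List (ASG.Gen G) :=
  List.replicate (u j) (ASG.Gen.edge (G.α p j)) ++
    List.replicate (u j) (ASG.Gen.edgeS (G.α p j))

lemma wprod_block (u : Fin (G.k p) → ℕ) (j : Fin (G.k p)) (x : ASG.SEC G)
    (hx : x * vE G p = x) :
    wprod G x (blockword G p u j) = x * Fp G p j (u j) := by
  rw [blockword, wprod_append, wprod_repA hp j _ x hx,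
    wprod_repAS hp j _ _ (by rw [mul_assoc, Lv hp]), Fp, mul_assoc]

def PFl (G : ASG) (p : G.I) (l : List (Fin (G.k p))) (u : Fin (G.k p) → ℕ) : ASG.SEC G :=
  l.foldl (fun acc j => acc * Fp G p j (u j)) (vE G p)

lemma wprod_flatten (u : Fin (G.k p) → ℕ) (l : List (Fin (G.k p))) (x : ASG.SEC G)
    (hx : x * vE G p = x) :
    wprod G x ((l.map (blockword G p u)).flatten) =
      l.foldl (fun acc j => acc * Fp G p j (u j)) x := by
  induction l generalizing x with
  | nil => rfl
  | cons j l ih =>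
    rw [List.map_cons, List.flatten_cons, wprod_append, wprod_block hp u j x hx,
      List.foldl_cons]
    exact ih _ (by rw [mul_assoc, Fv hp])

lemma mkS_eq_PFl (u : Fin (G.k p) → ℕ) :
    ASG.mkS G (ASG.idemMonWord G p u) = PFl G p (List.finRange (G.k p)) u := by
  rw [ASG.idemMonWord, mkS_cons, List.ofFn_eq_map]
  exact wprod_flatten hp u _ _ r_vv

lemma foldl_mul_left (u : Fin (G.k p) → ℕ) (l : List (Fin (G.k p))) (x y : ASG.SEC G) :
    l.foldl (fun acc j => acc * Fp G p j (u j)) (x * y) =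
      x * l.foldl (fun acc j => acc * Fp G p j (u j)) y := by
  induction l generalizing y with
  | nil => rfl
  | cons j l ih => rw [List.foldl_cons, List.foldl_cons, mul_assoc, ih]

lemma PFl_nil (u : Fin (G.k p) → ℕ) : PFl G p [] u = vE G p := rfl

lemma PFl_cons (u : Fin (G.k p) → ℕ) (j : Fin (G.k p)) (l : List (Fin (G.k p))) :
    PFl G p (j :: l) u = Fp G p j (u j) * PFl G p l u := by
  rw [PFl, List.foldl_cons]
  conv_lhs => rw [vF hp, ← Fv hp, foldl_mul_left hp]
  rfl

lemma F_PFl (i : Fin (G.k p)) (m : ℕ) (l : List (Fin (G.k p))) (u : Fin (G.k p) → ℕ) :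
    Fp G p i m * PFl G p l u = PFl G p l u * Fp G p i m := by
  induction l with
  | nil => rw [PFl_nil hp, vF hp, Fv hp]
  | cons j l ih =>
    rw [PFl_cons hp, ← mul_assoc, Fcomm hp, mul_assoc, ih, ← mul_assoc]

lemma PFl_mul (l : List (Fin (G.k p))) (kk ll : Fin (G.k p) → ℕ) :
    PFl G p l kk * PFl G p l ll = PFl G p l (fun j => max (kk j) (ll j)) := by
  induction l with
  | nil => exact r_vv
  | cons j l ih =>
    rw [PFl_cons hp, PFl_cons hp, PFl_cons hp, mul_assoc, ← mul_assoc (PFl G p l kk),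
      ← F_PFl hp, mul_assoc, ih, ← mul_assoc, Fmax hp]

end Words
end SJ

namespace SJ

section Alg

variable (K : Type) [Field K] {G : ASG}

lemma skMulAssoc (x y z : ASG.SK K G) : x * y * z = x * (y * z) := by
  have h : ∀ a b c : (ringConGen (ASG.ARel K G)).Quotient, a * b * c = a * (b * c) :=
    fun a b c => mul_assoc a b c
  exact h x y z

lemma coe_sum {R : Type*} [NonUnitalNonAssocSemiring R] (c : RingCon R) {A : Type*}
    (s : Finset A) (f : A → R) :
    ((s.sum f : R) : c.Quotient) = s.sum (fun a => ((f a : R) : c.Quotient)) := by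
  classical
  induction s using Finset.induction_on with
  | empty => rfl
  | insert _ _ ha ih => rw [Finset.sum_insert ha, Finset.sum_insert ha, RingCon.coe_add, ih]

lemma iota_mul (s t : ASG.SEC G) :
    ASG.iota K G (s * t) = ASG.iota K G s * ASG.iota K G t := by
  have h2 := RingCon.coe_mul (c := ringConGen (ASG.ARel K G))
    (MonoidAlgebra.single s (1 : K)) (MonoidAlgebra.single t (1 : K))
  rw [MonoidAlgebra.single_mul_single, one_mul] at h2
  exact h2

lemma iota_zero : ASG.iota K G (0 : ASG.SEC G) = 0 := by
  have h : (ringConGen (ASG.ARel K G))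
      (MonoidAlgebra.single (0 : ASG.SEC G) (1 : K)) 0 :=
    RingConGen.Rel.of _ _ (ASG.ARel.zero 1)
  exact ((RingCon.eq _).mpr h)

lemma star_mkS_edge (e : G.E) :
    star (ASG.mkS G [(.edge e : ASG.Gen G)]) = q G (ASG.ofg (.edgeS e)) := by
  show q G (ASG.sstar (ASG.ofg (.edge e))) = _
  rw [sstar_ofg]
  rfl

lemma iota_vrel (v : G.V) (X : Finset G.E) (hX : X ∈ G.C v) :
    ASG.iota K G (ASG.mkS G [.vert v]) =
      X.sum (fun e => ASG.iota K G
        (ASG.mkS G [.edge e] * star (ASG.mkS G [.edge e]))) := by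
  have h : (ringConGen (ASG.ARel K G))
      (MonoidAlgebra.single (ASG.mkS G [.vert v]) (1 : K))
      (X.sum fun e => MonoidAlgebra.single
        (ASG.mkS G [.edge e] * star (ASG.mkS G [.edge e])) (1 : K)) :=
    RingConGen.Rel.of _ _ (ASG.ARel.sums 1 v X hX)
  have h2 := (RingCon.eq _).mpr h
  rw [coe_sum] at h2
  exact h2

variable {p : G.I} (hp : G.free p)
include hp

lemma keyG3 (j : Fin (G.k p)) (s : ℕ) :
    ASG.iota K G (Fp G p j s) = ASG.iota K G (Fp G p j (s+1)) +
      ∑ t : Fin (G.g p j), ASG.iota K G (Gm G p j s t) := by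
  classical
  have hX : (insert (G.α p j) (Finset.image (G.β p j) Finset.univ)) ∈ G.C (G.fv p) :=
    (G.X_def p hp _).mpr ⟨j, rfl⟩
  have h0 := iota_vrel K (G.fv p) _ hX
  have hnotmem : G.α p j ∉ Finset.image (G.β p j) Finset.univ := by
    simp only [Finset.mem_image, Finset.mem_univ, true_and, not_exists]
    intro t h
    exact G.α_ne_β p hp j j t h.symm
  rw [Finset.sum_insert hnotmem] at h0
  have hβinj : ∀ t ∈ (Finset.univ : Finset (Fin (G.g p j))), ∀ t' ∈ Finset.univ,
      G.β p j t = G.β p j t' → t = t' := by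
    intro t _ t' _ h
    have h2 := G.β_inj p hp (a₁ := ⟨j, t⟩) (a₂ := ⟨j, t'⟩) h
    simpa using h2
  rw [Finset.sum_image hβinj] at h0
  -- h0 : iota (mkS [vert fv p]) = iota (aE * asE) + ∑ t, iota (btE * bsE)
  have hL : ∀ x : ASG.SEC G, ASG.iota K G (Lp G p j s * (x * Rp G p j s)) =
      ASG.iota K G (Lp G p j s) * (ASG.iota K G x * ASG.iota K G (Rp G p j s)) := by
    intro x; rw [iota_mul, iota_mul]
  have e1 : Fp G p j s = Lp G p j s * (vE G p * Rp G p j s) := by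
    rw [vR hp]; rfl
  have e2 : Lp G p j s * ((aE G p j * asE G p j) * Rp G p j s) = Fp G p j (s+1) := by
    rw [show aE G p j * asE G p j * Rp G p j s = aE G p j * (asE G p j * Rp G p j s)
      from mul_assoc _ _ _, ← mul_assoc]
    rfl
  have e3 : ∀ t, Lp G p j s * ((btE G p j t * bsE G p j t) * Rp G p j s) = Gm G p j s t := by
    intro t
    rw [mul_assoc]
    rfl
  calc ASG.iota K G (Fp G p j s)
      = ASG.iota K G (Lp G p j s) * (ASG.iota K G (vE G p) * ASG.iota K G (Rp G p j s)) := by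
        rw [e1, hL]
    _ = ASG.iota K G (Lp G p j s) *
        ((ASG.iota K G (aE G p j * asE G p j) +
          ∑ t : Fin (G.g p j), ASG.iota K G (btE G p j t * bsE G p j t)) *
            ASG.iota K G (Rp G p j s)) := by
        rw [show ASG.iota K G (vE G p) = ASG.iota K G (ASG.mkS G [.vert (G.fv p)]) from rfl,
          h0]
        simp only [star_mkS_edge]
        rfl
    _ = ASG.iota K G (Fp G p j (s+1)) +
        ∑ t : Fin (G.g p j), ASG.iota K G (Gm G p j s t) := by
        rw [add_mul, Finset.sum_mul, mul_add, Finset.mul_sum, ← hL, e2]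
        congr 1
        exact Finset.sum_congr rfl (fun t _ => by rw [← hL, e3])

end Alg
end SJ

namespace SJ

section Main

variable (K : Type) [Field K] {G : ASG} {p : G.I}

noncomputable def phi (K : Type) [Field K] (G : ASG) (p : G.I) (j : Fin (G.k p)) (n : ℕ) : ASG.SK K G :=
  ASG.iota K G (Fp G p j n)

noncomputable def Pk (K : Type) [Field K] (G : ASG) (p : G.I) (l : List (Fin (G.k p)))
    (u : Fin (G.k p) → ℕ) : ASG.SK K G :=
  ASG.iota K G (PFl G p l u)

variable (hp : G.free p)
include hp

lemma phi_comm (i j : Fin (G.k p)) (m n : ℕ) :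
    phi K G p i m * phi K G p j n = phi K G p j n * phi K G p i m := by
  rw [phi, phi, ← iota_mul, Fcomm hp, iota_mul]

lemma Pk_cons (j : Fin (G.k p)) (l : List (Fin (G.k p))) (u : Fin (G.k p) → ℕ) :
    Pk K G p (j :: l) u = phi K G p j (u j) * Pk K G p l u := by
  rw [Pk, PFl_cons hp, iota_mul]
  rfl

lemma Pk_phi_comm (l : List (Fin (G.k p))) (u : Fin (G.k p) → ℕ) (j : Fin (G.k p)) (m : ℕ) :
    Pk K G p l u * phi K G p j m = phi K G p j m * Pk K G p l u := by
  rw [Pk, phi, ← iota_mul, ← F_PFl hp, iota_mul]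

lemma dstep {i j : Fin (G.k p)} (hij : i ≠ j) (s s' : ℕ) :
    (phi K G p i s - phi K G p i (s+1)) * (phi K G p j s' - phi K G p j (s'+1)) = 0 := by
  have h1 : phi K G p i s - phi K G p i (s+1) =
      ∑ t : Fin (G.g p i), ASG.iota K G (Gm G p i s t) := by
    rw [phi, phi, keyG3 K hp i s, add_sub_cancel_left]
  have h2 : phi K G p j s' - phi K G p j (s'+1) =
      ∑ t : Fin (G.g p j), ASG.iota K G (Gm G p j s' t) := by
    rw [phi, phi, keyG3 K hp j s', add_sub_cancel_left]
  rw [h1, h2, Finset.sum_mul_sum]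
  refine Finset.sum_eq_zero fun t _ => Finset.sum_eq_zero fun t' _ => ?_
  rw [← iota_mul, Gortho hp hij, iota_zero]

lemma dright {i j : Fin (G.k p)} (hij : i ≠ j) (s : ℕ) {u' w' : ℕ} (h : u' ≤ w') :
    (phi K G p i s - phi K G p i (s+1)) * (phi K G p j u' - phi K G p j w') = 0 := by
  induction w', h using Nat.le_induction with
  | base => rw [sub_self, mul_zero]
  | succ w' hw ih =>
    have hsplit : phi K G p j u' - phi K G p j (w'+1) =
        (phi K G p j u' - phi K G p j w') + (phi K G p j w' - phi K G p j (w'+1)) := by abel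
    rw [hsplit, mul_add, ih, dstep K hp hij s w', add_zero]

lemma dOrtho {i j : Fin (G.k p)} (hij : i ≠ j) {u w u' w' : ℕ} (h : u ≤ w) (h' : u' ≤ w') :
    (phi K G p i u - phi K G p i w) * (phi K G p j u' - phi K G p j w') = 0 := by
  induction w, h using Nat.le_induction with
  | base => rw [sub_self, zero_mul]
  | succ w hw ih =>
    have hsplit : phi K G p i u - phi K G p i (w+1) =
        (phi K G p i u - phi K G p i w) + (phi K G p i w - phi K G p i (w+1)) := by abel
    rw [hsplit, add_mul, ih, dright K hp hij w h', add_zero]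

lemma Olem (kk ll : Fin (G.k p) → ℕ) (l : List (Fin (G.k p))) :
    ∀ u u' : Fin (G.k p) → ℕ,
    (∀ i, (u i = min (kk i) (ll i) ∨ u i = max (kk i) (ll i)) ∧
          (u' i = min (kk i) (ll i) ∨ u' i = max (kk i) (ll i))) →
    ∀ j, j ∉ l →
    (Pk K G p l u - Pk K G p l u') *
      (phi K G p j (min (kk j) (ll j)) - phi K G p j (max (kk j) (ll j))) = 0 := by
  induction l with
  | nil =>
    intro u u' _ j _
    rw [show Pk K G p [] u = Pk K G p [] u' from rfl, sub_self, zero_mul]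
  | cons i l ih =>
    intro u u' hu j hj
    have hj2 : j ≠ i ∧ j ∉ l := by simpa [List.mem_cons, not_or] using hj
    have hij : i ≠ j := Ne.symm hj2.1
    rw [Pk_cons K hp, Pk_cons K hp]
    have hsplit : phi K G p i (u i) * Pk K G p l u - phi K G p i (u' i) * Pk K G p l u' =
        phi K G p i (u i) * (Pk K G p l u - Pk K G p l u') +
          (phi K G p i (u i) - phi K G p i (u' i)) * Pk K G p l u' := by
      rw [mul_sub, sub_mul]; abel
    rw [hsplit, add_mul, skMulAssoc, ih u u' hu j hj2.2, mul_zero, skMulAssoc]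
    have hcom : Pk K G p l u' *
        (phi K G p j (min (kk j) (ll j)) - phi K G p j (max (kk j) (ll j))) =
        (phi K G p j (min (kk j) (ll j)) - phi K G p j (max (kk j) (ll j))) *
          Pk K G p l u' := by
      rw [mul_sub, sub_mul, Pk_phi_comm K hp, Pk_phi_comm K hp]
    rw [hcom, ← skMulAssoc]
    have hzero : (phi K G p i (u i) - phi K G p i (u' i)) *
        (phi K G p j (min (kk j) (ll j)) - phi K G p j (max (kk j) (ll j))) = 0 := by
      rcases (hu i).1 with h1 | h1 <;> rcases (hu i).2 with h2 | h2 <;> rw [h1, h2]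
      · rw [sub_self, zero_mul]
      · exact dOrtho K hp hij (min_le_max) (min_le_max)
      · have : phi K G p i (max (kk i) (ll i)) - phi K G p i (min (kk i) (ll i)) =
            -(phi K G p i (min (kk i) (ll i)) - phi K G p i (max (kk i) (ll i))) := by abel
        rw [this, neg_mul, dOrtho K hp hij (min_le_max) (min_le_max), neg_zero]
      · rw [sub_self, zero_mul]
    rw [hzero, zero_mul, add_zero]

end Main
end SJ

namespace SJ

section Final

variable (K : Type) [Field K] {G : ASG} {p : G.I} (hp : G.free p)
include hp

lemma Clem (kk ll : Fin (G.k p) → ℕ) (l : List (Fin (G.k p))) (hnd : l.Nodup) :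
    Pk K G p l (fun j => min (kk j) (ll j)) + Pk K G p l (fun j => max (kk j) (ll j)) =
      Pk K G p l kk + Pk K G p l ll := by
  induction l with
  | nil => rfl
  | cons i l ih =>
    have hi : i ∉ l := (List.nodup_cons.mp hnd).1
    have hIH := ih (List.nodup_cons.mp hnd).2
    rw [Pk_cons K hp, Pk_cons K hp, Pk_cons K hp, Pk_cons K hp]
    have hmx : Pk K G p l (fun j => max (kk j) (ll j)) =
        Pk K G p l kk + Pk K G p l ll - Pk K G p l (fun j => min (kk j) (ll j)) := by
      rw [← hIH]; abel
    have hcomm : ∀ (u : Fin (G.k p) → ℕ) (a b : ℕ),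
        (Pk K G p l (fun j => min (kk j) (ll j)) - Pk K G p l u) *
          (phi K G p i a - phi K G p i b) =
        (phi K G p i a - phi K G p i b) *
          (Pk K G p l (fun j => min (kk j) (ll j)) - Pk K G p l u) := by
      intro u a b
      simp only [sub_mul, mul_sub, Pk_phi_comm K hp]
      abel
    have hkk : ∀ i' : Fin (G.k p), kk i' = min (kk i') (ll i') ∨
        kk i' = max (kk i') (ll i') := by
      intro i'
      rcases le_total (kk i') (ll i') with h' | h'
      · exact Or.inl (min_eq_left h').symm
      · exact Or.inr (max_eq_left h').symm
    have hll : ∀ i' : Fin (G.k p), ll i' = min (kk i') (ll i') ∨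
        ll i' = max (kk i') (ll i') := by
      intro i'
      rcases le_total (kk i') (ll i') with h' | h'
      · exact Or.inr (max_eq_right h').symm
      · exact Or.inl (min_eq_right h').symm
    rcases le_total (kk i) (ll i) with h | h
    · have e1 : min (kk i) (ll i) = kk i := min_eq_left h
      have e2 : max (kk i) (ll i) = ll i := max_eq_right h
      rw [e1, e2]
      have horto : (Pk K G p l (fun j => min (kk j) (ll j)) - Pk K G p l kk) *
          (phi K G p i (min (kk i) (ll i)) - phi K G p i (max (kk i) (ll i))) = 0 :=
        Olem K hp kk ll l _ kk (fun i' => ⟨Or.inl rfl, hkk i'⟩) i hi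
      rw [e1, e2] at horto
      have hzero : (phi K G p i (kk i) - phi K G p i (ll i)) *
          (Pk K G p l (fun j => min (kk j) (ll j)) - Pk K G p l kk) = 0 := by
        rw [← hcomm, horto]
      have key : phi K G p i (kk i) * Pk K G p l (fun j => min (kk j) (ll j)) +
          phi K G p i (ll i) * Pk K G p l (fun j => max (kk j) (ll j)) -
          (phi K G p i (kk i) * Pk K G p l kk + phi K G p i (ll i) * Pk K G p l ll) =
          (phi K G p i (kk i) - phi K G p i (ll i)) *
            (Pk K G p l (fun j => min (kk j) (ll j)) - Pk K G p l kk) := by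
        rw [hmx]
        simp only [mul_add, mul_sub, sub_mul]
        abel
      exact sub_eq_zero.mp (key.trans hzero)
    · have e1 : min (kk i) (ll i) = ll i := min_eq_right h
      have e2 : max (kk i) (ll i) = kk i := max_eq_left h
      rw [e1, e2]
      have horto : (Pk K G p l (fun j => min (kk j) (ll j)) - Pk K G p l ll) *
          (phi K G p i (min (kk i) (ll i)) - phi K G p i (max (kk i) (ll i))) = 0 :=
        Olem K hp kk ll l _ ll (fun i' => ⟨Or.inl rfl, hll i'⟩) i hi
      rw [e1, e2] at horto
      have hzero : (phi K G p i (ll i) - phi K G p i (kk i)) *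
          (Pk K G p l (fun j => min (kk j) (ll j)) - Pk K G p l ll) = 0 := by
        rw [← hcomm, horto]
      have key : phi K G p i (ll i) * Pk K G p l (fun j => min (kk j) (ll j)) +
          phi K G p i (kk i) * Pk K G p l (fun j => max (kk j) (ll j)) -
          (phi K G p i (kk i) * Pk K G p l kk + phi K G p i (ll i) * Pk K G p l ll) =
          (phi K G p i (ll i) - phi K G p i (kk i)) *
            (Pk K G p l (fun j => min (kk j) (ll j)) - Pk K G p l ll) := by
        rw [hmx]
        simp only [mul_add, mul_sub, sub_mul]
        abel
      exact sub_eq_zero.mp (key.trans hzero)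

end Final
end SJ


/-- Let `(E,C)` be an adaptable separated graph, `K` a field with
involution, `p ∈ I_free`, and let `m₁ = ∏_j α(p,j)^{k_j}(α(p,j)^*)^{k_j}` and
`m₂ = ∏_j α(p,j)^{l_j}(α(p,j)^*)^{l_j}` be idempotent monomials at `p`.  With
`m₁ ∨ m₂ := ∏_j α(p,j)^{min(k_j,l_j)}(α(p,j)^*)^{min(k_j,l_j)}` (the least upper bound of
`m₁` and `m₂` in `𝓔`), in `S_K(E,C)` one has
`ι(m₁ ∨ m₂) = ι(m₁) ∨ ι(m₂) = ι(m₁) + ι(m₂) − ι(m₁)ι(m₂)`. -/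
theorem ASG.iota_join (K : Type) [Field K] [StarRing K] (G : ASG)
    (p : G.I) (hp : G.free p) (kk ll : Fin (G.k p) → ℕ) :
    ASG.iota K G (ASG.mkS G (ASG.idemMonWord G p (fun j => min (kk j) (ll j)))) =
      ASG.iota K G (ASG.mkS G (ASG.idemMonWord G p kk)) +
        ASG.iota K G (ASG.mkS G (ASG.idemMonWord G p ll)) -
        ASG.iota K G (ASG.mkS G (ASG.idemMonWord G p kk)) *
          ASG.iota K G (ASG.mkS G (ASG.idemMonWord G p ll)) := by
  rw [SJ.mkS_eq_PFl hp, SJ.mkS_eq_PFl hp, SJ.mkS_eq_PFl hp]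
  rw [← SJ.iota_mul, SJ.PFl_mul hp]
  have hC := SJ.Clem K hp kk ll (List.finRange (G.k p)) (List.nodup_finRange _)
  exact eq_sub_of_add_eq hC
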